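/- arXiv:1708.05502 — 4 statements merged into one kernel-verified Lean document; each statement's English description precedes it below -/
import Mathlib

section
/- Let 0 < α < 1, n ≥ 1 a natural number, and T : [0,∞) → ℝ be (n+1)-times continuously differentiable. Define (CF D^{α+n} T)(t) = (1/(1-α)) ∫₀ᵗ T^{(n+1)}(s) e^{-(α/(1-α))(t-s)} ds. Then (CF D^{α+n} T)(t) = (1/(1-α)) [ Σ_{i=0}^{n} (-α/(1-α))^i ( T^{(n-i)}(t) - T^{(n-i)}(0) e^{-(α/(1-α)) t} ) + (-α/(1-α))^{n+1} ∫₀ᵗ T(s) e^{-(α/(1-α))(t-s)} ds ] for all t ≥ 0. -/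
open Real Finset intervalIntegral

lemma cf_parts (k t : ℝ) (g : ℝ → ℝ) (hg : Continuous g) (hg' : Continuous (deriv g))
    (hd : ∀ s, HasDerivAt g (deriv g s) s) :
    ∫ s in (0:ℝ)..t, deriv g s * Real.exp (-k * (t - s))
      = (g t - g 0 * Real.exp (-k * t))
        + (-k) * ∫ s in (0:ℝ)..t, g s * Real.exp (-k * (t - s)) := by
  have hE : ∀ s : ℝ, HasDerivAt (fun s => Real.exp (-k * (t - s)))
      (k * Real.exp (-k * (t - s))) s := by
    intro s
    have h1 : HasDerivAt (fun s : ℝ => -k * (t - s)) k s := by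
      simpa using ((hasDerivAt_id s).const_sub t).const_mul (-k)
    simpa [mul_comm] using h1.exp
  have key := integral_mul_deriv_eq_deriv_mul
    (u := fun s => Real.exp (-k * (t - s))) (v := g)
    (u' := fun s => k * Real.exp (-k * (t - s))) (v' := deriv g)
    (a := 0) (b := t)
    (fun x _ => hE x) (fun x _ => hd x)
    ((Continuous.intervalIntegrable (by continuity) 0 t))
    (hg'.intervalIntegrable 0 t)
  have c1 : ∀ s, Real.exp (-k * (t - s)) * deriv g s = deriv g s * Real.exp (-k * (t - s)) := by
    intro s; ring
  have c2 : ∀ s, k * Real.exp (-k * (t - s)) * g s = -((-k) * (g s * Real.exp (-k * (t - s)))) := by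
    intro s; ring
  simp only [c1, c2] at key
  rw [intervalIntegral.integral_neg, intervalIntegral.integral_const_mul] at key
  rw [key]
  simp [mul_comm]
  ring

lemma cf_aux (k : ℝ) (n : ℕ) (T : ℝ → ℝ) (hT : ContDiff ℝ (n + 1) T) (t : ℝ) :
    ∀ m : ℕ, m ≤ n + 1 →
    ∫ s in (0:ℝ)..t, iteratedDeriv m T s * Real.exp (-k * (t - s))
      = (∑ i ∈ Finset.range m, (-k) ^ i *
          (iteratedDeriv (m - 1 - i) T t - iteratedDeriv (m - 1 - i) T 0 * Real.exp (-k * t)))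
        + (-k) ^ m * ∫ s in (0:ℝ)..t, T s * Real.exp (-k * (t - s)) := by
  intro m
  induction m with
  | zero => intro _; simp [iteratedDeriv_zero]
  | succ m ih =>
    intro hm
    have hm' : m ≤ n + 1 := Nat.le_of_succ_le hm
    have hdiff : Differentiable ℝ (iteratedDeriv m T) :=
      hT.differentiable_iteratedDeriv m (by exact_mod_cast Nat.lt_of_lt_of_le (Nat.lt_succ_self m) hm)
    have hcont : Continuous (iteratedDeriv m T) := hdiff.continuous
    have hcont' : Continuous (deriv (iteratedDeriv m T)) := by
      rw [← iteratedDeriv_succ]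
      exact hT.continuous_iteratedDeriv (m + 1) (by exact_mod_cast hm)
    have step := cf_parts k t (iteratedDeriv m T) hcont hcont' (fun s => (hdiff s).hasDerivAt)
    rw [iteratedDeriv_succ, step, ih hm']
    rw [Finset.sum_range_succ']
    have hS : ∀ i ∈ Finset.range m, (-k) ^ (i + 1) *
        (iteratedDeriv (m + 1 - 1 - (i + 1)) T t
          - iteratedDeriv (m + 1 - 1 - (i + 1)) T 0 * Real.exp (-k * t))
        = -k * ((-k) ^ i * (iteratedDeriv (m - 1 - i) T t
          - iteratedDeriv (m - 1 - i) T 0 * Real.exp (-k * t))) := by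
      intro i _
      rw [show m + 1 - 1 - (i + 1) = m - 1 - i from by omega]
      ring
    rw [Finset.sum_congr rfl hS, ← Finset.mul_sum]
    simp only [Nat.add_sub_cancel, Nat.sub_zero, pow_zero, one_mul, pow_succ]
    ring

theorem cf_higher_order_formula (α : ℝ) (hα0 : 0 < α) (hα1 : α < 1)
    (n : ℕ) (hn : 1 ≤ n) (T : ℝ → ℝ) (hT : ContDiff ℝ (n + 1) T) :
    ∀ t : ℝ, 0 ≤ t →
      (1 / (1 - α)) * ∫ s in (0:ℝ)..t, iteratedDeriv (n + 1) T s * Real.exp (-(α / (1 - α)) * (t - s))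
        = (1 / (1 - α)) *
          ((∑ i ∈ Finset.range (n + 1), (-(α / (1 - α))) ^ i *
              (iteratedDeriv (n - i) T t - iteratedDeriv (n - i) T 0 * Real.exp (-(α / (1 - α)) * t)))
            + (-(α / (1 - α))) ^ (n + 1) *
              ∫ s in (0:ℝ)..t, T s * Real.exp (-(α / (1 - α)) * (t - s))) := by
  intro t ht
  have h := cf_aux (α / (1 - α)) n T hT t (n + 1) le_rfl
  simp only [Nat.add_sub_cancel] at h
  rw [h]
end

section
/- Let 0 < α < 1, m ∈ ℕ₊, and λ₂ ≠ 0, λ₁, λ₀ real. Suppose T : [0,∞) → ℝ is four times continuously differentiable, f_m : [0,∞) → ℝ is continuously differentiable, T(0) = T'(0) = T''(0) = 0, and T satisfies Σ_{n=0}^{2} λ_n (CF D^{α+n} T)(t) + (mπ)² T(t) = f_m(t) for all t ≥ 0, where CF D^{α+n} denotes the Caputo–Fabrizio derivative of order α+n based at 0. Then T̃(t) = T(t) e^{(α/(1-α)) t} satisfies the third-order linear ODE T̃'''(t) + A₁ T̃''(t) + A₂ T̃'(t) + A₃ T̃(t) = g_m(t), where A₁ = -3α/(1-α) + λ₁/λ₂,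 A₂ = 3(α/(1-α))² + (λ₀ - 2αλ₁/(1-α) + (mπ)²(1-α))/λ₂, A₃ = -(α/(1-α))³ + ((α/(1-α))² λ₁ - (α/(1-α)) λ₀)/λ₂, and g_m(t) = (1/λ₂) [α f_m(t) + (1-α) f_m'(t)] e^{(α/(1-α)) t}. -/
open Real

lemma endgame2 (α k lam0 lam1 lam2 e T0 D1 D2 D3 F F' P : ℝ)
    (h1 : (1:ℝ) - α ≠ 0) (h2 : lam2 ≠ 0) (hk : k = α / (1 - α))
    (hE : lam0 * (D1 * e) + lam1 * (D2 * e) + lam2 * (D3 * e)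
      + P * (1 - α) * ((D1 + k * T0) * e) - (1 - α) * ((F' + k * F) * e) = 0) :
    (((D3 + k * D2) + k * (D2 + k * D1)) + k * ((D2 + k * D1) + k * (D1 + k * T0))) * e
      + (-3 * α / (1 - α) + lam1 / lam2) * ((((D2 + k * D1) + k * (D1 + k * T0))) * e)
      + (3 * k ^ 2 + (lam0 - 2 * α * lam1 / (1 - α) + P * (1 - α)) / lam2) * ((D1 + k * T0) * e)
      + (-k ^ 3 + (k ^ 2 * lam1 - k * lam0) / lam2) * (T0 * e)
      = 1 / lam2 * (α * F + (1 - α) * F') * e := by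
  have h3k : -3 * α / (1 - α) = -3 * k := by rw [hk]; ring
  have h2k : 2 * α * lam1 / (1 - α) = 2 * k * lam1 := by rw [hk]; ring
  have hαF : α * F = k * (1 - α) * F := by rw [hk]; field_simp
  rw [h3k, h2k, hαF]
  field_simp
  linear_combination hE


theorem cf_three_term_reduction (α : ℝ) (hα0 : 0 < α) (hα1 : α < 1)
    (m : ℕ) (hm : 0 < m) (lam0 lam1 lam2 : ℝ) (hlam2 : lam2 ≠ 0)
    (T fm : ℝ → ℝ) (hT : ContDiff ℝ 4 T) (hf : ContDiff ℝ 1 fm)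
    (hT0 : T 0 = 0) (hT1 : deriv T 0 = 0) (hT2 : iteratedDeriv 2 T 0 = 0)
    (heq : ∀ t : ℝ, 0 ≤ t →
      lam0 * ((1 / (1 - α)) * ∫ s in (0:ℝ)..t, iteratedDeriv 1 T s * Real.exp (-(α / (1 - α)) * (t - s)))
        + lam1 * ((1 / (1 - α)) * ∫ s in (0:ℝ)..t, iteratedDeriv 2 T s * Real.exp (-(α / (1 - α)) * (t - s)))
        + lam2 * ((1 / (1 - α)) * ∫ s in (0:ℝ)..t, iteratedDeriv 3 T s * Real.exp (-(α / (1 - α)) * (t - s)))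
        + ((m : ℝ) * π) ^ 2 * T t = fm t) :
    ∀ t : ℝ, 0 ≤ t →
      iteratedDeriv 3 (fun s => T s * Real.exp ((α / (1 - α)) * s)) t
        + (-3 * α / (1 - α) + lam1 / lam2) *
            iteratedDeriv 2 (fun s => T s * Real.exp ((α / (1 - α)) * s)) t
        + (3 * (α / (1 - α)) ^ 2 +
            (lam0 - 2 * α * lam1 / (1 - α) + ((m : ℝ) * π) ^ 2 * (1 - α)) / lam2) *
            deriv (fun s => T s * Real.exp ((α / (1 - α)) * s)) t
        + (-(α / (1 - α)) ^ 3 +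
            ((α / (1 - α)) ^ 2 * lam1 - (α / (1 - α)) * lam0) / lam2) *
            (T t * Real.exp ((α / (1 - α)) * t))
        = (1 / lam2) * (α * fm t + (1 - α) * deriv fm t) * Real.exp ((α / (1 - α)) * t) := by
  intro t ht
  have h1α : (0:ℝ) < 1 - α := by linarith
  have h1α' : (1:ℝ) - α ≠ 0 := ne_of_gt h1α
  set k := α / (1 - α) with hk
  -- differentiability tower
  have h4 : ContDiff ℝ ((3:ℕ)+1) T := hT
  have hTdiff : Differentiable ℝ T := (contDiff_succ_iff_deriv.mp h4).1
  have hD1 : ContDiff ℝ ((2:ℕ)+1) (deriv T) := (contDiff_succ_iff_deriv.mp h4).2.2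
  have hD1diff : Differentiable ℝ (deriv T) := (contDiff_succ_iff_deriv.mp hD1).1
  have hD2 : ContDiff ℝ ((1:ℕ)+1) (deriv (deriv T)) := (contDiff_succ_iff_deriv.mp hD1).2.2
  have hD2diff : Differentiable ℝ (deriv (deriv T)) := (contDiff_succ_iff_deriv.mp hD2).1
  have hD3 : ContDiff ℝ ((0:ℕ)+1) (deriv (deriv (deriv T))) := (contDiff_succ_iff_deriv.mp hD2).2.2
  have hD3cont : Continuous (deriv (deriv (deriv T))) := hD3.continuous
  have hD1cont : Continuous (deriv T) := hD1.continuous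
  have hD2cont : Continuous (deriv (deriv T)) := hD2.continuous
  have hf' : ContDiff ℝ ((0:ℕ)+1) fm := hf
  have hfdiff : Differentiable ℝ fm := (contDiff_succ_iff_deriv.mp hf').1
  have hf'cont : Continuous (deriv fm) := ((contDiff_succ_iff_deriv.mp hf').2.2).continuous
  -- iterated derivatives
  have hi1 : iteratedDeriv 1 T = deriv T := iteratedDeriv_one
  have hi2 : iteratedDeriv 2 T = deriv (deriv T) := by
    rw [show (2:ℕ) = 1+1 from rfl, iteratedDeriv_succ, iteratedDeriv_one]
  have hi3 : iteratedDeriv 3 T = deriv (deriv (deriv T)) := by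
    rw [show (3:ℕ) = 2+1 from rfl, iteratedDeriv_succ, hi2]
  -- product derivative helper
  have hmul : ∀ (u : ℝ → ℝ), Differentiable ℝ u → ∀ x : ℝ,
      HasDerivAt (fun s => u s * Real.exp (k * s)) ((deriv u x + k * u x) * Real.exp (k * x)) x := by
    intro u hu x
    have h1 : HasDerivAt (fun s => Real.exp (k * s)) (Real.exp (k * x) * k) x := by
      simpa using ((hasDerivAt_id x).const_mul k).exp
    have := ((hu x).hasDerivAt).mul h1
    exact this.congr_deriv (by ring)
  -- FTC helper
  have hexpc : Continuous (fun s : ℝ => Real.exp (k * s)) := by fun_prop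
  have hJder : ∀ (g : ℝ → ℝ), Continuous g → ∀ x : ℝ,
      HasDerivAt (fun v => ∫ s in (0:ℝ)..v, g s * Real.exp (k * s)) (g x * Real.exp (k * x)) x := by
    intro g hg x
    exact ((hg.mul hexpc).integral_hasStrictDerivAt 0 x).hasDerivAt
  -- kernel rewrite
  have hker : ∀ (g : ℝ → ℝ) (x : ℝ),
      (∫ s in (0:ℝ)..x, g s * Real.exp (-k * (x - s)))
        = Real.exp (-(k * x)) * ∫ s in (0:ℝ)..x, g s * Real.exp (k * s) := by
    intro g x
    rw [← intervalIntegral.integral_const_mul]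
    apply intervalIntegral.integral_congr
    intro s _
    show g s * Real.exp (-k * (x - s)) = Real.exp (-(k * x)) * (g s * Real.exp (k * s))
    rw [show -k * (x - s) = -(k * x) + k * s by ring, Real.exp_add]; ring
  -- the function Φ
  set Φ : ℝ → ℝ := fun u =>
      lam0 * (∫ s in (0:ℝ)..u, deriv T s * Real.exp (k * s))
    + lam1 * (∫ s in (0:ℝ)..u, deriv (deriv T) s * Real.exp (k * s))
    + lam2 * (∫ s in (0:ℝ)..u, deriv (deriv (deriv T)) s * Real.exp (k * s))
    + ((m:ℝ) * π)^2 * (1 - α) * (T u * Real.exp (k * u))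
    - (1 - α) * (fm u * Real.exp (k * u)) with hΦ
  have hΦ0 : ∀ u : ℝ, 0 ≤ u → Φ u = 0 := by
    intro u hu
    have h := heq u hu
    rw [hi1, hi2, hi3, hker _ u, hker _ u, hker _ u, Real.exp_neg] at h
    rw [hΦ]
    field_simp at h
    linear_combination h
  -- derivative of Φ
  have hΦder : ∀ u : ℝ, HasDerivAt Φ (
      lam0 * (deriv T u * Real.exp (k * u))
    + lam1 * (deriv (deriv T) u * Real.exp (k * u))
    + lam2 * (deriv (deriv (deriv T)) u * Real.exp (k * u))
    + ((m:ℝ) * π)^2 * (1 - α) * ((deriv T u + k * T u) * Real.exp (k * u))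
    - (1 - α) * ((deriv fm u + k * fm u) * Real.exp (k * u))) u := by
    intro u
    exact (((((hJder _ hD1cont u).const_mul lam0).add
      ((hJder _ hD2cont u).const_mul lam1)).add
      ((hJder _ hD3cont u).const_mul lam2)).add
      ((hmul T hTdiff u).const_mul (((m:ℝ) * π)^2 * (1 - α)))).sub
      ((hmul fm hfdiff u).const_mul (1 - α))
  -- deduce E = 0 on Ici 0
  have hE0 : ∀ u : ℝ, 0 ≤ u →
      lam0 * (deriv T u * Real.exp (k * u))
    + lam1 * (deriv (deriv T) u * Real.exp (k * u))
    + lam2 * (deriv (deriv (deriv T)) u * Real.exp (k * u))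
    + ((m:ℝ) * π)^2 * (1 - α) * ((deriv T u + k * T u) * Real.exp (k * u))
    - (1 - α) * ((deriv fm u + k * fm u) * Real.exp (k * u)) = 0 := by
    intro u hu
    have heqon : Set.EqOn Φ (fun _ => (0:ℝ)) (Set.Ici 0) := fun x hx => hΦ0 x hx
    have h1 : derivWithin Φ (Set.Ici (0:ℝ)) u = 0 := by
      rw [derivWithin_congr heqon (hΦ0 u hu)]
      exact congrFun (derivWithin_const _ _) u
    have h2 := (hΦder u).hasDerivWithinAt.derivWithin (uniqueDiffOn_Ici 0 u hu)
    rw [h1] at h2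
    linarith [h2]
  -- derivatives of T̃
  have hd1 : deriv (fun s => T s * Real.exp (k * s))
      = fun u => (deriv T u + k * T u) * Real.exp (k * u) :=
    funext fun u => (hmul T hTdiff u).deriv
  have hu1diff : Differentiable ℝ (fun u => deriv T u + k * T u) :=
    hD1diff.add (hTdiff.const_mul k)
  have hu1der : deriv (fun u => deriv T u + k * T u)
      = fun u => deriv (deriv T) u + k * deriv T u := by
    funext u
    rw [deriv_fun_add (hD1diff u) ((hTdiff u).const_mul k), deriv_const_mul k (hTdiff u)]
  have hd2 : iteratedDeriv 2 (fun s => T s * Real.exp (k * s))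
      = fun u => ((deriv (deriv T) u + k * deriv T u) + k * (deriv T u + k * T u)) * Real.exp (k * u) := by
    rw [show (2:ℕ) = 1+1 from rfl, iteratedDeriv_succ, iteratedDeriv_one, hd1]
    funext u
    rw [(hmul _ hu1diff u).deriv, hu1der]
  have hu2diff : Differentiable ℝ
      (fun u => (deriv (deriv T) u + k * deriv T u) + k * (deriv T u + k * T u)) :=
    (hD2diff.add (hD1diff.const_mul k)).add (hu1diff.const_mul k)
  have hu2der : deriv (fun u => (deriv (deriv T) u + k * deriv T u) + k * (deriv T u + k * T u))
      = fun u => (deriv (deriv (deriv T)) u + k * deriv (deriv T) u)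
          + k * (deriv (deriv T) u + k * deriv T u) := by
    funext u
    rw [deriv_fun_add (show DifferentiableAt ℝ (fun y => deriv (deriv T) y + k * deriv T y) u from
        (hD2diff.add (hD1diff.const_mul k)) u) ((hu1diff u).const_mul k),
      deriv_fun_add (hD2diff u) ((hD1diff u).const_mul k), deriv_const_mul k (hD1diff u),
      deriv_const_mul k (hu1diff u)]
    have h := congrFun hu1der u
    simp only [h]
  have hd3 : iteratedDeriv 3 (fun s => T s * Real.exp (k * s))
      = fun u => (((deriv (deriv (deriv T)) u + k * deriv (deriv T) u)
          + k * (deriv (deriv T) u + k * deriv T u))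
          + k * ((deriv (deriv T) u + k * deriv T u) + k * (deriv T u + k * T u)))
          * Real.exp (k * u) := by
    rw [show (3:ℕ) = 2+1 from rfl, iteratedDeriv_succ, hd2]
    funext u
    rw [(hmul _ hu2diff u).deriv, hu2der]
  -- finish
  rw [hd1, hd2, hd3]
  exact endgame2 α k lam0 lam1 lam2 (Real.exp (k * t)) (T t) (deriv T t)
    (deriv (deriv T) t) (deriv (deriv (deriv T)) t) (fm t) (deriv fm t)
    (((m:ℝ) * π) ^ 2) h1α' hlam2 hk (hE0 t ht)
end

section
/- Let 0 < α < 1 and let T : [0,∞) → ℝ be continuously differentiable with T(0) = 0. If (CF D^α T)(t) = 0 for all t ≥ 0, where (CF D^α T)(t) = (1/(1-α)) ∫₀ᵗ T'(s) e^{-(α/(1-α))(t-s)} ds, then T(t) = 0 for all t ≥ 0. -/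
open Real

theorem cf_kernel_trivial (α : ℝ) (hα0 : 0 < α) (hα1 : α < 1)
    (T : ℝ → ℝ) (hT : ContDiff ℝ 1 T) (hT0 : T 0 = 0)
    (hcf : ∀ t : ℝ, 0 ≤ t →
      (1 / (1 - α)) * ∫ s in (0:ℝ)..t, deriv T s * Real.exp (-(α / (1 - α)) * (t - s)) = 0) :
    ∀ t : ℝ, 0 ≤ t → T t = 0 := by
  have h1α : (0:ℝ) < 1 - α := by linarith
  set lam := α / (1 - α) with hlam
  have hcd : Continuous (deriv T) := hT.continuous_deriv le_rfl
  have hg : Continuous (fun s => deriv T s * Real.exp (lam * s)) := by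
    continuity
  -- Step 1: the modified integral vanishes for t ≥ 0
  have hF : ∀ t : ℝ, 0 ≤ t →
      (∫ s in (0:ℝ)..t, deriv T s * Real.exp (lam * s)) = 0 := by
    intro t ht
    have h := hcf t ht
    have hne : (1 / (1 - α)) ≠ 0 := by positivity
    have h2 : (∫ s in (0:ℝ)..t, deriv T s * Real.exp (-lam * (t - s))) = 0 := by
      rcases mul_eq_zero.mp h with h' | h'
      · exact absurd h' hne
      · exact h'
    have hrw : ∀ s : ℝ, deriv T s * Real.exp (-lam * (t - s)) =
        Real.exp (-lam * t) * (deriv T s * Real.exp (lam * s)) := by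
      intro s
      rw [show -lam * (t - s) = -lam * t + lam * s by ring, Real.exp_add]
      ring
    rw [intervalIntegral.integral_congr (fun s _ => hrw s),
      intervalIntegral.integral_const_mul] at h2
    rcases mul_eq_zero.mp h2 with h' | h'
    · exact absurd h' (Real.exp_ne_zero _)
    · exact h'
  -- Step 2: deriv T t = 0 for t > 0
  have hd : ∀ t : ℝ, 0 < t → deriv T t = 0 := by
    intro t ht
    have hderiv : HasDerivAt (fun u => ∫ s in (0:ℝ)..u, deriv T s * Real.exp (lam * s))
        (deriv T t * Real.exp (lam * t)) t :=
      intervalIntegral.integral_hasDerivAt_right (hg.intervalIntegrable 0 t)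
        (hg.stronglyMeasurableAtFilter _ _) hg.continuousAt
    have heq : (fun u => ∫ s in (0:ℝ)..u, deriv T s * Real.exp (lam * s)) =ᶠ[nhds t]
        (fun _ => (0:ℝ)) := by
      filter_upwards [eventually_gt_nhds ht] with u hu
      exact hF u hu.le
    have hzero : HasDerivAt (fun u => ∫ s in (0:ℝ)..u, deriv T s * Real.exp (lam * s)) 0 t :=
      (hasDerivAt_const t (0:ℝ)).congr_of_eventuallyEq heq
    have := hderiv.unique hzero
    have hexp : Real.exp (lam * t) ≠ 0 := Real.exp_ne_zero _
    exact (mul_eq_zero.mp this).resolve_right hexp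
  -- Step 3: by continuity, deriv T = 0 on [0, ∞)
  have hd' : ∀ t : ℝ, 0 ≤ t → deriv T t = 0 := by
    intro t ht
    have hcl : Set.EqOn (deriv T) (fun _ => (0:ℝ)) (closure (Set.Ioi (0:ℝ))) :=
      Set.EqOn.closure (fun x hx => hd x hx) hcd continuous_const
    rw [closure_Ioi] at hcl
    exact hcl ht
  -- Step 4: conclude
  intro t ht
  have hftc : (∫ s in (0:ℝ)..t, deriv T s) = T t - T 0 := by
    apply intervalIntegral.integral_deriv_eq_sub
    · intro x _
      exact hT.differentiable one_ne_zero x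
    · exact hcd.intervalIntegrable 0 t
  have hint0 : (∫ s in (0:ℝ)..t, deriv T s) = 0 := by
    rw [intervalIntegral.integral_congr (g := fun _ => (0:ℝ))]
    · simp
    · intro s hs
      rw [Set.uIcc_of_le ht] at hs
      exact hd' s hs.1
  rw [hint0] at hftc
  linarith [hftc, hT0.symm ▸ hftc]
end

section
/- Let 0 < α < 1, λ₀, λ₁, λ₂ ∈ ℝ with λ₂ ≠ 0, q > 0, and m ∈ ℕ₊. Suppose f_m : [0,q] → ℝ is continuously differentiable. Then there is at most one function T : [0,q] → ℝ that is three times continuously differentiable, satisfies T(0) = T'(0) = T''(0) = 0, and solves Σ_{n=0}^{2} λ_n (CF D^{α+n} T)(t) + (mπ)² T(t) = f_m(t) on [0,q]. -/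
open Real

private lemma my_iteratedDeriv_sub {n : ℕ} {f g : ℝ → ℝ} (hf : ContDiff ℝ n f)
    (hg : ContDiff ℝ n g) (x : ℝ) :
    iteratedDeriv n (fun t => f t - g t) x = iteratedDeriv n f x - iteratedDeriv n g x := by
  have h : (fun t => f t - g t) = (f + fun t => -g t) := by
    funext t; simp [sub_eq_add_neg]
  simp only [iteratedDeriv_eq_iteratedFDeriv]
  rw [h, iteratedFDeriv_add_apply hf.contDiffAt hg.neg.contDiffAt]
  have hneg : iteratedFDeriv ℝ n (fun x => -g x) x = -iteratedFDeriv ℝ n g x :=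
    iteratedFDeriv_neg_apply
  rw [hneg]
  simp [sub_eq_add_neg]

private lemma hom_zero (α q : ℝ) (hα0 : 0 < α) (hα1 : α < 1) (hq : 0 < q)
    (M lam0 lam1 lam2 : ℝ) (hlam2 : lam2 ≠ 0)
    (D : ℝ → ℝ) (hD : ContDiff ℝ 3 D) (h0 : D 0 = 0) (h1 : deriv D 0 = 0)
    (h2 : iteratedDeriv 2 D 0 = 0)
    (heq : ∀ t ∈ Set.Icc (0:ℝ) q,
      lam0 * ((1 / (1 - α)) * ∫ s in (0:ℝ)..t, iteratedDeriv 1 D s * Real.exp (-(α / (1 - α)) * (t - s)))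
        + lam1 * ((1 / (1 - α)) * ∫ s in (0:ℝ)..t, iteratedDeriv 2 D s * Real.exp (-(α / (1 - α)) * (t - s)))
        + lam2 * ((1 / (1 - α)) * ∫ s in (0:ℝ)..t, iteratedDeriv 3 D s * Real.exp (-(α / (1 - α)) * (t - s)))
        + M * D t = 0) :
    ∀ t ∈ Set.Icc (0:ℝ) q, D t = 0 := by
  have h1α : (0:ℝ) < 1 - α := by linarith
  set k : ℝ := α / (1 - α) with hkdef
  have hk : 0 ≤ k := div_nonneg hα0.le h1α.le
  -- continuity of iterated derivatives
  have cont : ∀ n : ℕ, n ≤ 3 → Continuous (iteratedDeriv n D) := by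
    intro n hn
    exact hD.continuous_iteratedDeriv n (by exact_mod_cast Nat.cast_le.mpr hn)
  have cont0 : Continuous D := hD.continuous
  have cont1 := cont 1 (by norm_num)
  have cont2 := cont 2 (by norm_num)
  have cont3 := cont 3 (by norm_num)
  -- the comparison function
  set u : ℝ → ℝ := fun t => |D t| + |iteratedDeriv 1 D t| + |iteratedDeriv 2 D t| with hudef
  have hu_cont : Continuous u := ((cont0.abs.add cont1.abs).add cont2.abs)
  have hu_nonneg : ∀ t, 0 ≤ u t := fun t => by positivity
  set v : ℝ → ℝ := fun t => ∫ s in (0:ℝ)..t, u s with hvdef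
  have hv_deriv : ∀ t, HasDerivAt v (u t) t := by
    intro t
    exact intervalIntegral.integral_hasDerivAt_right
      (hu_cont.intervalIntegrable 0 t)
      (hu_cont.stronglyMeasurableAtFilter _ _)
      hu_cont.continuousAt
  have hv0 : v 0 = 0 := intervalIntegral.integral_same
  -- |∫₀ᵗ f| ≤ v t whenever |f| ≤ u pointwise on [0,t]
  have habs : ∀ (f : ℝ → ℝ), Continuous f → (∀ s, |f s| ≤ u s) → ∀ t, 0 ≤ t →
      |∫ s in (0:ℝ)..t, f s| ≤ v t := by
    intro f hf hfu t ht
    calc |∫ s in (0:ℝ)..t, f s| ≤ ∫ s in (0:ℝ)..t, |f s| :=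
          intervalIntegral.abs_integral_le_integral_abs ht
      _ ≤ v t := intervalIntegral.integral_mono_on ht (hf.abs.intervalIntegrable 0 t)
          (hu_cont.intervalIntegrable 0 t) (fun s _ => hfu s)
  -- exp kernel bounded by 1 on [0,t]
  have hker : ∀ t s : ℝ, s ≤ t → Real.exp (-k * (t - s)) ≤ 1 := by
    intro t s hst
    rw [Real.exp_le_one_iff]
    have : 0 ≤ k * (t - s) := mul_nonneg hk (by linarith)
    linarith
  have hker_pos : ∀ t s : ℝ, 0 < Real.exp (-k * (t - s)) := fun t s => Real.exp_pos _
  have hker_cont : ∀ t : ℝ, Continuous (fun s => Real.exp (-k * (t - s))) := by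
    intro t; fun_prop
  -- bound convolution integrals
  have hconv : ∀ n : ℕ, n ≤ 2 → ∀ t, 0 ≤ t →
      |∫ s in (0:ℝ)..t, iteratedDeriv n D s * Real.exp (-k * (t - s))| ≤ v t := by
    intro n hn t ht
    have hfn : Continuous (iteratedDeriv n D) := cont n (by omega)
    calc |∫ s in (0:ℝ)..t, iteratedDeriv n D s * Real.exp (-k * (t - s))|
        ≤ ∫ s in (0:ℝ)..t, |iteratedDeriv n D s * Real.exp (-k * (t - s))| :=
          intervalIntegral.abs_integral_le_integral_abs ht
      _ ≤ ∫ s in (0:ℝ)..t, u s := by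
          apply intervalIntegral.integral_mono_on ht
            ((hfn.mul (hker_cont t)).abs.intervalIntegrable 0 t)
            (hu_cont.intervalIntegrable 0 t)
          intro s hs
          simp only [Pi.mul_apply]; rw [abs_mul, abs_of_pos (hker_pos t s)]
          have h1 : |iteratedDeriv n D s| * Real.exp (-k * (t - s)) ≤ |iteratedDeriv n D s| :=
            mul_le_of_le_one_right (abs_nonneg _) (hker t s hs.2)
          refine h1.trans ?_
          interval_cases n <;> simp only [hudef, iteratedDeriv_zero] <;>
            linarith [abs_nonneg (D s), abs_nonneg (iteratedDeriv 1 D s),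
              abs_nonneg (iteratedDeriv 2 D s)]
      _ = v t := rfl
  -- FTC facts
  have hasD1 : ∀ s : ℝ, HasDerivAt D (iteratedDeriv 1 D s) s := by
    intro s
    rw [iteratedDeriv_one]
    exact ((hD.differentiable (by norm_num)) s).hasDerivAt
  have hasD2 : ∀ s : ℝ, HasDerivAt (iteratedDeriv 1 D) (iteratedDeriv 2 D s) s := by
    intro s
    have h := ((hD.differentiable_iteratedDeriv 1 (by norm_num)) s).hasDerivAt
    rwa [← iteratedDeriv_succ] at h
  have hasD3 : ∀ s : ℝ, HasDerivAt (iteratedDeriv 2 D) (iteratedDeriv 3 D s) s := by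
    intro s
    have h := ((hD.differentiable_iteratedDeriv 2 (by norm_num)) s).hasDerivAt
    rwa [← iteratedDeriv_succ] at h
  have hDrep : ∀ t : ℝ, D t = ∫ s in (0:ℝ)..t, iteratedDeriv 1 D s := by
    intro t
    have := intervalIntegral.integral_eq_sub_of_hasDerivAt
      (f := D) (f' := iteratedDeriv 1 D) (a := 0) (b := t)
      (fun s _ => hasD1 s) (cont1.intervalIntegrable 0 t)
    rw [this, h0, sub_zero]
  have hD1rep : ∀ t : ℝ, iteratedDeriv 1 D t = ∫ s in (0:ℝ)..t, iteratedDeriv 2 D s := by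
    intro t
    have := intervalIntegral.integral_eq_sub_of_hasDerivAt
      (f := iteratedDeriv 1 D) (f' := iteratedDeriv 2 D) (a := 0) (b := t)
      (fun s _ => hasD2 s) (cont2.intervalIntegrable 0 t)
    rw [this, iteratedDeriv_one, h1, sub_zero]
  -- |D t| ≤ v t and |D' t| ≤ v t for t ≥ 0
  have hDle : ∀ t, 0 ≤ t → |D t| ≤ v t := by
    intro t ht
    rw [hDrep t]
    refine habs _ cont1 (fun s => ?_) t ht
    simp only [hudef]
    linarith [abs_nonneg (D s), abs_nonneg (iteratedDeriv 2 D s)]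
  have hD1le : ∀ t, 0 ≤ t → |iteratedDeriv 1 D t| ≤ v t := by
    intro t ht
    rw [hD1rep t]
    refine habs _ cont2 (fun s => ?_) t ht
    simp only [hudef]
    linarith [abs_nonneg (D s), abs_nonneg (iteratedDeriv 1 D s)]
  -- integration by parts: J3 = D'' t - k * J2
  have hIBP : ∀ t : ℝ,
      (∫ s in (0:ℝ)..t, iteratedDeriv 3 D s * Real.exp (-k * (t - s)))
        = iteratedDeriv 2 D t
          - k * ∫ s in (0:ℝ)..t, iteratedDeriv 2 D s * Real.exp (-k * (t - s)) := by
    intro t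
    have hg : ∀ s : ℝ, HasDerivAt (fun s => iteratedDeriv 2 D s * Real.exp (-k * (t - s)))
        (iteratedDeriv 3 D s * Real.exp (-k * (t - s))
          + iteratedDeriv 2 D s * (k * Real.exp (-k * (t - s)))) s := by
      intro s
      have hexp : HasDerivAt (fun s : ℝ => Real.exp (-k * (t - s))) (k * Real.exp (-k * (t - s))) s := by
        have hlin : HasDerivAt (fun s : ℝ => -k * (t - s)) k s := by
          have := ((hasDerivAt_id s).const_sub t).const_mul (-k)
          simpa using this
        simpa [mul_comm] using hlin.exp
      exact (hasD3 s).mul hexp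
    have hint : IntervalIntegrable (fun s =>
        iteratedDeriv 3 D s * Real.exp (-k * (t - s))
          + iteratedDeriv 2 D s * (k * Real.exp (-k * (t - s)))) MeasureTheory.volume 0 t :=
      (((cont3.mul (hker_cont t)).add
        (cont2.mul (continuous_const.mul (hker_cont t))))).intervalIntegrable 0 t
    have hFTC := intervalIntegral.integral_eq_sub_of_hasDerivAt (fun s _ => hg s) hint
    have hsplit : (∫ s in (0:ℝ)..t,
        (iteratedDeriv 3 D s * Real.exp (-k * (t - s))
          + iteratedDeriv 2 D s * (k * Real.exp (-k * (t - s)))))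
        = (∫ s in (0:ℝ)..t, iteratedDeriv 3 D s * Real.exp (-k * (t - s)))
          + k * ∫ s in (0:ℝ)..t, iteratedDeriv 2 D s * Real.exp (-k * (t - s)) := by
      rw [intervalIntegral.integral_add (f := fun s => iteratedDeriv 3 D s * Real.exp (-k * (t - s)))
        (g := fun s => iteratedDeriv 2 D s * (k * Real.exp (-k * (t - s)))) ((cont3.mul (hker_cont t)).intervalIntegrable 0 t)
        ((cont2.mul (continuous_const.mul (hker_cont t))).intervalIntegrable 0 t),
        ← intervalIntegral.integral_const_mul]
      congr 1
      apply intervalIntegral.integral_congr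
      intro s _
      ring
    rw [hsplit, h2] at hFTC
    have htt : -k * (t - t) = 0 := by ring
    rw [htt, Real.exp_zero, mul_one, zero_mul, sub_zero] at hFTC
    linarith
  -- constant for the Gronwall bound
  set C2 : ℝ := (|lam2 * k - lam1| + |lam0| + (1 - α) * |M|) / |lam2| with hC2def
  have hC2 : 0 ≤ C2 := by positivity
  set C : ℝ := 2 + C2 with hCdef
  -- key pointwise bound: u t ≤ C * v t on [0,q]
  have hbound : ∀ t ∈ Set.Icc (0:ℝ) q, u t ≤ C * v t := by
    intro t ht
    obtain ⟨ht0, htq⟩ := ht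
    have heqt := heq t ⟨ht0, htq⟩
    rw [hIBP t] at heqt
    set A : ℝ := ∫ s in (0:ℝ)..t, iteratedDeriv 1 D s * Real.exp (-k * (t - s)) with hA
    set B : ℝ := ∫ s in (0:ℝ)..t, iteratedDeriv 2 D s * Real.exp (-k * (t - s)) with hB
    have key : lam2 * iteratedDeriv 2 D t
        = (lam2 * k - lam1) * B - lam0 * A - (1 - α) * (M * D t) := by
      field_simp at heqt
      linear_combination heqt
    have hAle : |A| ≤ v t := hconv 1 (by norm_num) t ht0
    have hBle : |B| ≤ v t := hconv 2 (by norm_num) t ht0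
    have hDvt : |D t| ≤ v t := hDle t ht0
    have hD2le : |iteratedDeriv 2 D t| ≤ C2 * v t := by
      have h5 : |lam2 * iteratedDeriv 2 D t|
          ≤ (|lam2 * k - lam1| + |lam0| + (1 - α) * |M|) * v t := by
        rw [key]
        calc |(lam2 * k - lam1) * B - lam0 * A - (1 - α) * (M * D t)|
            ≤ |(lam2 * k - lam1) * B| + |lam0 * A| + |(1 - α) * (M * D t)| := by
              apply (abs_sub _ _).trans
              gcongr
              exact abs_sub _ _
          _ ≤ |lam2 * k - lam1| * v t + |lam0| * v t + (1 - α) * (|M| * v t) := by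
              have h3 : |(1 - α) * (M * D t)| = (1 - α) * (|M| * |D t|) := by
                rw [abs_mul, abs_mul, abs_of_pos h1α]
              rw [abs_mul, abs_mul, h3]
              gcongr
          _ = (|lam2 * k - lam1| + |lam0| + (1 - α) * |M|) * v t := by ring
      rw [abs_mul] at h5
      rw [hC2def, div_mul_eq_mul_div, le_div_iff₀ (abs_pos.mpr hlam2)]
      calc |iteratedDeriv 2 D t| * |lam2| = |lam2| * |iteratedDeriv 2 D t| := by ring
        _ ≤ (|lam2 * k - lam1| + |lam0| + (1 - α) * |M|) * v t := h5
    have hD1vt : |iteratedDeriv 1 D t| ≤ v t := hD1le t ht0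
    have : u t ≤ v t + v t + C2 * v t := by
      rw [hudef]
      dsimp only
      gcongr
    calc u t ≤ v t + v t + C2 * v t := this
      _ = C * v t := by rw [hCdef]; ring
  -- Gronwall
  have hv_cont : ContinuousOn v (Set.Icc 0 q) :=
    (fun t _ => ((hv_deriv t).continuousAt.continuousWithinAt))
  have hgron := norm_le_gronwallBound_of_norm_deriv_right_le (f := v) (f' := u)
    (δ := 0) (K := C) (ε := 0) (a := 0) (b := q) hv_cont
    (fun x _ => (hv_deriv x).hasDerivWithinAt)
    (by simp [hv0])
    (by
      intro x hx
      have hx' : x ∈ Set.Icc (0:ℝ) q := ⟨hx.1, hx.2.le⟩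
      have h1 := hbound x hx'
      have hvx : 0 ≤ v x := by
        apply intervalIntegral.integral_nonneg hx.1
        intro s _; exact hu_nonneg s
      rw [Real.norm_eq_abs, Real.norm_eq_abs, abs_of_nonneg (hu_nonneg x),
        abs_of_nonneg hvx, add_zero]
      exact h1)
  intro t ht
  have hvt := hgron t ht
  rw [gronwallBound_ε0_δ0] at hvt
  have hvt' : v t ≤ 0 := le_trans (le_abs_self _) hvt
  have hDt := hDle t ht.1
  have : |D t| ≤ 0 := le_trans hDt hvt'
  exact abs_eq_zero.mp (le_antisymm this (abs_nonneg _))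

theorem cf_three_term_uniqueness (α q : ℝ) (hα0 : 0 < α) (hα1 : α < 1) (hq : 0 < q)
    (m : ℕ) (hm : 0 < m) (lam0 lam1 lam2 : ℝ) (hlam2 : lam2 ≠ 0)
    (fm : ℝ → ℝ) (hf : ContDiff ℝ 1 fm) :
    ∀ T1 T2 : ℝ → ℝ,
      ContDiff ℝ 3 T1 → T1 0 = 0 → deriv T1 0 = 0 → iteratedDeriv 2 T1 0 = 0 →
      (∀ t ∈ Set.Icc (0:ℝ) q,
        lam0 * ((1 / (1 - α)) * ∫ s in (0:ℝ)..t, iteratedDeriv 1 T1 s * Real.exp (-(α / (1 - α)) * (t - s)))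
          + lam1 * ((1 / (1 - α)) * ∫ s in (0:ℝ)..t, iteratedDeriv 2 T1 s * Real.exp (-(α / (1 - α)) * (t - s)))
          + lam2 * ((1 / (1 - α)) * ∫ s in (0:ℝ)..t, iteratedDeriv 3 T1 s * Real.exp (-(α / (1 - α)) * (t - s)))
          + ((m : ℝ) * π) ^ 2 * T1 t = fm t) →
      ContDiff ℝ 3 T2 → T2 0 = 0 → deriv T2 0 = 0 → iteratedDeriv 2 T2 0 = 0 →
      (∀ t ∈ Set.Icc (0:ℝ) q,
        lam0 * ((1 / (1 - α)) * ∫ s in (0:ℝ)..t, iteratedDeriv 1 T2 s * Real.exp (-(α / (1 - α)) * (t - s)))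
          + lam1 * ((1 / (1 - α)) * ∫ s in (0:ℝ)..t, iteratedDeriv 2 T2 s * Real.exp (-(α / (1 - α)) * (t - s)))
          + lam2 * ((1 / (1 - α)) * ∫ s in (0:ℝ)..t, iteratedDeriv 3 T2 s * Real.exp (-(α / (1 - α)) * (t - s)))
          + ((m : ℝ) * π) ^ 2 * T2 t = fm t) →
      ∀ t ∈ Set.Icc (0:ℝ) q, T1 t = T2 t := by
  intro T1 T2 hT1 hT10 hT11 hT12 heq1 hT2 hT20 hT21 hT22 heq2 t ht
  set D : ℝ → ℝ := fun t => T1 t - T2 t with hDdef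
  have hD : ContDiff ℝ 3 D := hT1.sub hT2
  have hsub : ∀ n : ℕ, n ≤ 3 → ∀ x : ℝ,
      iteratedDeriv n D x = iteratedDeriv n T1 x - iteratedDeriv n T2 x := by
    intro n hn x
    exact my_iteratedDeriv_sub (hT1.of_le (by exact_mod_cast Nat.cast_le.mpr hn))
      (hT2.of_le (by exact_mod_cast Nat.cast_le.mpr hn)) x
  have hcontT : ∀ (T : ℝ → ℝ), ContDiff ℝ 3 T → ∀ n : ℕ, n ≤ 3 → Continuous (iteratedDeriv n T) := by
    intro T hT n hn
    exact hT.continuous_iteratedDeriv n (by exact_mod_cast Nat.cast_le.mpr hn)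
  have hkc : Continuous (fun s => Real.exp (-(α / (1 - α)) * (t - s))) := by fun_prop
  have heqD : ∀ t ∈ Set.Icc (0:ℝ) q,
      lam0 * ((1 / (1 - α)) * ∫ s in (0:ℝ)..t, iteratedDeriv 1 D s * Real.exp (-(α / (1 - α)) * (t - s)))
        + lam1 * ((1 / (1 - α)) * ∫ s in (0:ℝ)..t, iteratedDeriv 2 D s * Real.exp (-(α / (1 - α)) * (t - s)))
        + lam2 * ((1 / (1 - α)) * ∫ s in (0:ℝ)..t, iteratedDeriv 3 D s * Real.exp (-(α / (1 - α)) * (t - s)))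
        + ((m : ℝ) * π) ^ 2 * D t = 0 := by
    intro τ hτ
    have hkcτ : Continuous (fun s => Real.exp (-(α / (1 - α)) * (τ - s))) := by fun_prop
    have hintsplit : ∀ n : ℕ, n ≤ 3 →
        (∫ s in (0:ℝ)..τ, iteratedDeriv n D s * Real.exp (-(α / (1 - α)) * (τ - s)))
          = (∫ s in (0:ℝ)..τ, iteratedDeriv n T1 s * Real.exp (-(α / (1 - α)) * (τ - s)))
            - ∫ s in (0:ℝ)..τ, iteratedDeriv n T2 s * Real.exp (-(α / (1 - α)) * (τ - s)) := by
      intro n hn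
      rw [← intervalIntegral.integral_sub (f := fun s => iteratedDeriv n T1 s * Real.exp (-(α / (1 - α)) * (τ - s)))
        (g := fun s => iteratedDeriv n T2 s * Real.exp (-(α / (1 - α)) * (τ - s)))
        (((hcontT T1 hT1 n hn).mul hkcτ).intervalIntegrable 0 τ)
        (((hcontT T2 hT2 n hn).mul hkcτ).intervalIntegrable 0 τ)]
      apply intervalIntegral.integral_congr
      intro s _
      dsimp only
      rw [hsub n hn s]
      ring
    rw [hintsplit 1 (by norm_num), hintsplit 2 (by norm_num), hintsplit 3 (by norm_num)]
    have e1 := heq1 τ hτ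
    have e2 := heq2 τ hτ
    have hDτ : D τ = T1 τ - T2 τ := rfl
    rw [hDτ]
    linear_combination e1 - e2
  have hD0 : D 0 = 0 := by simp [hDdef, hT10, hT20]
  have hD1 : deriv D 0 = 0 := by
    have : deriv D 0 = deriv T1 0 - deriv T2 0 := by
      apply deriv_sub
      · exact (hT1.differentiable (by norm_num)).differentiableAt
      · exact (hT2.differentiable (by norm_num)).differentiableAt
    rw [this, hT11, hT21, sub_zero]
  have hD2 : iteratedDeriv 2 D 0 = 0 := by
    rw [hsub 2 (by norm_num), hT12, hT22, sub_zero]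
  have := hom_zero α q hα0 hα1 hq (((m : ℝ) * π) ^ 2) lam0 lam1 lam2 hlam2 D hD hD0 hD1 hD2 heqD t ht
  simpa [hDdef, sub_eq_zero] using this
end
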